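/- The matrix fractional function (U, Σ) ↦ trace(Uᵀ Σ⁻¹ U) is jointly convex on ℝ^{n×m} × {symmetric positive definite n×n matrices}: for all U₁, U₂ ∈ ℝ^{n×m}, all symmetric positive definite n×n matrices Σ₁, Σ₂, and all λ ∈ [0,1], trace((λU₁ + (1−λ)U₂)ᵀ (λΣ₁ + (1−λ)Σ₂)⁻¹ (λU₁ + (1−λ)U₂)) ≤ λ·trace(U₁ᵀ Σ₁⁻¹ U₁) + (1−λ)·trace(U₂ᵀ Σ₂⁻¹ U₂). -/

import Mathlib

open Matrix

/-- The controllability matrix `[B, AB, A²B, …, A^{n−1}B]` (columns indexed by `Fin n × Fin m`). -/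
def ctrbMatrix {n m : ℕ} (A : Matrix (Fin n) (Fin n) ℝ) (B : Matrix (Fin n) (Fin m) ℝ) :
    Matrix (Fin n) (Fin n × Fin m) ℝ :=
  Matrix.of fun i p => ((A ^ (p.1 : ℕ)) * B) i p.2

/-- `(A,B)` is a controllable pair iff the controllability matrix has rank `n`. -/
def IsControllablePair {n m : ℕ} (A : Matrix (Fin n) (Fin n) ℝ)
    (B : Matrix (Fin n) (Fin m) ℝ) : Prop :=
  (ctrbMatrix A B).rank = n

/-- A real square matrix is Hurwitz iff all its (complex) eigenvalues have negative real part. -/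
def IsHurwitz {n : ℕ} (F : Matrix (Fin n) (Fin n) ℝ) : Prop :=
  ∀ μ ∈ spectrum ℂ (F.map (algebraMap ℝ ℂ)), μ.re < 0


lemma aux_trace_nonneg {k : ℕ} {M : Matrix (Fin k) (Fin k) ℝ} (hM : M.PosSemidef) :
    0 ≤ M.trace := by
  apply Finset.sum_nonneg
  intro i _
  have h := hM.2 (Finsupp.single i 1)
  simpa [Finsupp.sum_single_index] using h

lemma aux_smul_psd {k : ℕ} {M : Matrix (Fin k) (Fin k) ℝ} (hM : M.PosSemidef)
    {c : ℝ} (hc : 0 ≤ c) : (c • M).PosSemidef := by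
  constructor
  · have : (c • M)ᴴ = c • M := by
      rw [conjTranspose_smul, hM.1.eq]; simp
    exact this
  · intro x
    have := hM.2 x
    convert smul_nonneg hc this using 1
    rw [smul_eq_mul, Finsupp.mul_sum]; refine Finsupp.sum_congr fun i _ => ?_
    rw [Finsupp.mul_sum]; refine Finsupp.sum_congr fun j _ => ?_
    simp only [Matrix.smul_apply, smul_eq_mul, star_trivial]; ring

lemma aux_key {n m : ℕ} {S : Matrix (Fin n) (Fin n) ℝ} (hS : S.PosDef)
    (U X : Matrix (Fin n) (Fin m) ℝ) :
    (Xᵀ * U).trace + (Uᵀ * X).trace - (Xᵀ * S * X).trace ≤ (Uᵀ * S⁻¹ * U).trace := by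
  have hdet : IsUnit S.det := hS.det_pos.ne'.isUnit
  have hSsym : Sᵀ = S := by
    have := hS.1.eq
    rwa [conjTranspose_eq_transpose_of_trivial] at this
  have hSinv : S * S⁻¹ = 1 := mul_nonsing_inv S hdet
  have hSinv' : S⁻¹ * S = 1 := nonsing_inv_mul S hdet
  set A : Matrix (Fin n) (Fin m) ℝ := S⁻¹ * U with hA
  have hAT : Aᵀ * S = Uᵀ := by
    rw [hA, transpose_mul, transpose_nonsing_inv, hSsym, Matrix.mul_assoc, hSinv', Matrix.mul_one]
  have hSA : S * A = U := by
    rw [hA, ← Matrix.mul_assoc, hSinv, Matrix.one_mul]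
  have hexp : (X - A)ᵀ * S * (X - A)
      = Xᵀ * S * X - Xᵀ * U - Uᵀ * X + Uᵀ * S⁻¹ * U := by
    have hATA : Aᵀ * S * A = Uᵀ * S⁻¹ * U := by rw [hAT, hA, Matrix.mul_assoc]
    rw [transpose_sub, Matrix.sub_mul, Matrix.sub_mul, Matrix.mul_sub, Matrix.mul_sub]
    rw [hATA, hAT, Matrix.mul_assoc Xᵀ S A, hSA]
    abel
  have hpsd : ((X - A)ᵀ * S * (X - A)).PosSemidef := by
    have h := hS.posSemidef.conjTranspose_mul_mul_same (X - A)
    rwa [conjTranspose_eq_transpose_of_trivial] at h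
  have h0 : 0 ≤ ((X - A)ᵀ * S * (X - A)).trace := aux_trace_nonneg hpsd
  rw [hexp] at h0
  simp only [trace_add, trace_sub] at h0
  linarith

/-- joint convexity of the matrix fractional function
`(U,Σ) ↦ trace(Uᵀ Σ⁻¹ U)` on `ℝ^{n×m} ×` (positive definite matrices). -/
theorem stmt11 {n m : ℕ} (U₁ U₂ : Matrix (Fin n) (Fin m) ℝ)
    (S₁ S₂ : Matrix (Fin n) (Fin n) ℝ) (hS₁ : S₁.PosDef) (hS₂ : S₂.PosDef)
    (l : ℝ) (hl0 : 0 ≤ l) (hl1 : l ≤ 1) :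
    ((l • U₁ + (1 - l) • U₂)ᵀ * (l • S₁ + (1 - l) • S₂)⁻¹
        * (l • U₁ + (1 - l) • U₂)).trace
      ≤ l * (U₁ᵀ * S₁⁻¹ * U₁).trace + (1 - l) * (U₂ᵀ * S₂⁻¹ * U₂).trace := by
  set S : Matrix (Fin n) (Fin n) ℝ := l • S₁ + (1 - l) • S₂ with hSdef
  set U : Matrix (Fin n) (Fin m) ℝ := l • U₁ + (1 - l) • U₂ with hUdef
  have hS : S.PosDef := by
    rcases eq_or_lt_of_le hl1 with h1 | h1
    · subst h1
      simpa [hSdef] using hS₁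
    · refine Matrix.PosDef.posSemidef_add (aux_smul_psd hS₁.posSemidef hl0) ?_
      constructor
      · have : ((1 - l) • S₂)ᴴ = (1 - l) • S₂ := by
          rw [conjTranspose_smul, hS₂.1.eq]; simp
        exact this
      · intro x hx
        have := hS₂.2 hx
        convert smul_pos (by linarith : (0:ℝ) < 1 - l) this using 1
        rw [smul_eq_mul, Finsupp.mul_sum]; refine Finsupp.sum_congr fun i _ => ?_
        rw [Finsupp.mul_sum]; refine Finsupp.sum_congr fun j _ => ?_
        simp only [Matrix.smul_apply, smul_eq_mul, star_trivial]; ring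
  set X : Matrix (Fin n) (Fin m) ℝ := S⁻¹ * U with hX
  have hdet : IsUnit S.det := hS.det_pos.ne'.isUnit
  have hSsym : Sᵀ = S := by
    have := hS.1.eq
    rwa [conjTranspose_eq_transpose_of_trivial] at this
  have hXT : Xᵀ = Uᵀ * S⁻¹ := by
    rw [hX, transpose_mul, transpose_nonsing_inv, hSsym]
  have hSX : S * X = U := by
    rw [hX, ← Matrix.mul_assoc, mul_nonsing_inv S hdet, Matrix.one_mul]
  have e1 : Xᵀ * U = Uᵀ * S⁻¹ * U := by rw [hXT]
  have e2 : Uᵀ * X = Uᵀ * S⁻¹ * U := by rw [hX, Matrix.mul_assoc]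
  have e3 : Xᵀ * S * X = Uᵀ * S⁻¹ * U := by rw [hXT, Matrix.mul_assoc, hSX]
  have hmain : (Uᵀ * S⁻¹ * U).trace
      = (Xᵀ * U).trace + (Uᵀ * X).trace - (Xᵀ * S * X).trace := by
    rw [e1, e2, e3]; ring
  have split1 : (Xᵀ * U).trace = l * (Xᵀ * U₁).trace + (1 - l) * (Xᵀ * U₂).trace := by
    rw [hUdef]
    simp [Matrix.mul_add, Matrix.mul_smul, trace_add, trace_smul, smul_eq_mul]
  have split2 : (Uᵀ * X).trace = l * (U₁ᵀ * X).trace + (1 - l) * (U₂ᵀ * X).trace := by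
    rw [hUdef]
    simp [transpose_add, transpose_smul, Matrix.add_mul, Matrix.smul_mul, trace_add,
      trace_smul, smul_eq_mul]
  have split3 : (Xᵀ * S * X).trace
      = l * (Xᵀ * S₁ * X).trace + (1 - l) * (Xᵀ * S₂ * X).trace := by
    rw [hSdef]
    simp [Matrix.mul_add, Matrix.add_mul, Matrix.mul_smul, Matrix.smul_mul, trace_add,
      trace_smul, smul_eq_mul]
  have b1 := aux_key hS₁ U₁ X
  have b2 := aux_key hS₂ U₂ X
  rw [hmain, split1, split2, split3]
  nlinarith [mul_le_mul_of_nonneg_left b1 hl0,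
    mul_le_mul_of_nonneg_left b2 (by linarith : (0:ℝ) ≤ 1 - l)]
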